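/- Let θ = (W1, b1, W2, b2, W3, b3) be a parameter of a three-layer ReLU network with architecture (d, n1, 1, m) (a single second-layer neuron) that is normalized and hides hyperplane j ∈ [n1], i.e., W2 ∈ ℝ^{1×n1} satisfies W2_{1j} = 1 and W2_{1k} = −1 for all k ≠ j, and b2 = −1. Then for every subset I ⊆ [n1]∖{j}, the parameter M_I·θ = (M_I·W1, M_I·b1, W2, b2, W3, b3) realizes the same function: f_{M_I·θ}(x) = f_θ(x) for all x ∈ ℝ^d. -/

import Mathlib

open Matrix

noncomputable section

/-- Entrywise ReLU. -/
def relu {n : ℕ} (x : Fin n → ℝ) : Fin n → ℝ := fun i => max (x i) 0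

/-- Realization of a three-layer ReLU network with architecture (d, n1, n2, m). -/
def net3 {d n1 n2 m : ℕ}
    (W1 : Matrix (Fin n1) (Fin d) ℝ) (b1 : Fin n1 → ℝ)
    (W2 : Matrix (Fin n2) (Fin n1) ℝ) (b2 : Fin n2 → ℝ)
    (W3 : Matrix (Fin m) (Fin n2) ℝ) (b3 : Fin m → ℝ)
    (x : Fin d → ℝ) : Fin m → ℝ :=
  W3 *ᵥ relu (W2 *ᵥ relu (W1 *ᵥ x + b1) + b2) + b3

/-- The flip matrix `M_I = I − Σ_{k∈I} e_j e_kᵀ − 2 Σ_{k∈I} e_k e_kᵀ`. -/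
def Mflip {n1 : ℕ} (j : Fin n1) (I : Finset (Fin n1)) : Matrix (Fin n1) (Fin n1) ℝ :=
  1 - (∑ k ∈ I, Matrix.single j k (1 : ℝ))
    - (2 : ℝ) • (∑ k ∈ I, Matrix.single k k (1 : ℝ))

lemma sum_mulVec' {ι n m : ℕ} (s : Finset (Fin ι)) (f : Fin ι → Matrix (Fin m) (Fin n) ℝ)
    (v : Fin n → ℝ) : (∑ i ∈ s, f i) *ᵥ v = ∑ i ∈ s, f i *ᵥ v := by
  ext l
  simp only [Matrix.mulVec, dotProduct, Matrix.sum_apply, Finset.sum_apply, Finset.sum_mul]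
  rw [Finset.sum_comm]

lemma Mflip_mulVec {n1 : ℕ} (j : Fin n1) (I : Finset (Fin n1)) (hI : j ∉ I)
    (v : Fin n1 → ℝ) (i : Fin n1) :
    (Mflip j I *ᵥ v) i =
      if i = j then v j - ∑ k ∈ I, v k else if i ∈ I then -v i else v i := by
  unfold Mflip
  rw [Matrix.sub_mulVec, Matrix.sub_mulVec, Matrix.smul_mulVec, Matrix.one_mulVec,
    sum_mulVec', sum_mulVec']
  simp only [Matrix.single_mulVec, one_mul, Pi.sub_apply, Pi.smul_apply,
    Finset.sum_apply, smul_eq_mul]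
  have h1 : ∀ k : Fin n1, Function.update (0 : Fin n1 → ℝ) j (v k) i =
      if i = j then v k else 0 := by
    intro k
    by_cases h : i = j
    · subst h; simp
    · simp [Function.update_of_ne h, h]
  have h2 : ∀ k : Fin n1, Function.update (0 : Fin n1 → ℝ) k (v k) i =
      if k = i then v i else 0 := by
    intro k
    by_cases h : i = k
    · subst h; simp
    · rw [Function.update_of_ne h]; simp [Ne.symm h]
  simp only [h1, h2]
  by_cases h : i = j
  · subst h
    simp only [if_pos rfl]
    rw [Finset.sum_ite_eq' I i (fun _ => v i)]
    simp [hI]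
  · simp only [if_neg h]
    rw [Finset.sum_ite_eq' I i (fun _ => v i)]
    by_cases h2 : i ∈ I <;> simp [h2] <;> try ring

lemma key_relu (u S T C : ℝ) (hT : 0 ≤ T) (hST : 0 ≤ S + T) (hC : 0 ≤ C) :
    max (max (u - S) 0 - T - C - 1) 0 = max (max u 0 - (S + T) - C - 1) 0 := by
  rcases le_total u 0 with h | h <;> rcases le_total (u - S) 0 with h2 | h2
  · rw [max_eq_right h, max_eq_right h2, max_eq_right (by linarith), max_eq_right (by linarith)]
  · rw [max_eq_right h, max_eq_left h2, max_eq_right (by linarith), max_eq_right (by linarith)]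
  · rw [max_eq_left h, max_eq_right h2, max_eq_right (by linarith), max_eq_right (by linarith)]
  · rw [max_eq_left h, max_eq_left h2]; ring_nf

/-- for a normalized parameter with a single second-layer neuron that hides
hyperplane `j`, the discrete sign-flip symmetry `M_I` does not change the realized function. -/
theorem flip_hidden_hyperplane_same_function {d n1 m : ℕ}
    (W1 : Matrix (Fin n1) (Fin d) ℝ) (b1 : Fin n1 → ℝ)
    (W2 : Matrix (Fin 1) (Fin n1) ℝ) (b2 : Fin 1 → ℝ)
    (W3 : Matrix (Fin m) (Fin 1) ℝ) (b3 : Fin m → ℝ)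
    (j : Fin n1)
    (hWj : W2 0 j = 1)
    (hWk : ∀ k : Fin n1, k ≠ j → W2 0 k = -1)
    (hb2 : b2 0 = -1)
    (I : Finset (Fin n1)) (hI : j ∉ I) :
    ∀ x : Fin d → ℝ,
      net3 (Mflip j I * W1) (Mflip j I *ᵥ b1) W2 b2 W3 b3 x
        = net3 W1 b1 W2 b2 W3 b3 x := by
  intro x
  unfold net3
  set z := W1 *ᵥ x + b1 with hz
  have hmz : (Mflip j I * W1) *ᵥ x + Mflip j I *ᵥ b1 = Mflip j I *ᵥ z := by
    rw [hz, Matrix.mulVec_add, Matrix.mulVec_mulVec]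
  rw [hmz]
  suffices h : relu (W2 *ᵥ relu (Mflip j I *ᵥ z) + b2) = relu (W2 *ᵥ relu z + b2) by rw [h]
  funext i
  have hi : i = 0 := Subsingleton.elim i 0
  subst hi
  -- sums split
  have hIsub : I ⊆ Finset.univ.erase j := by
    intro k hk
    exact Finset.mem_erase.mpr ⟨fun hkj => hI (hkj ▸ hk), Finset.mem_univ k⟩
  have hsplit : ∀ w : Fin n1 → ℝ,
      (W2 *ᵥ w) 0 = W2 0 j * w j + (∑ k ∈ (Finset.univ.erase j) \ I, W2 0 k * w k
        + ∑ k ∈ I, W2 0 k * w k) := by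
    intro w
    show ∑ k, W2 0 k * w k = _
    rw [Finset.sum_sdiff hIsub]
    rw [← Finset.add_sum_erase _ (fun k => W2 0 k * w k) (Finset.mem_univ j)]
  have hvz : ∀ k ∈ Finset.univ.erase j, W2 0 k = -1 := fun k hk =>
    hWk k (Finset.mem_erase.mp hk).1
  -- values of flipped preactivation
  have hmj : (Mflip j I *ᵥ z) j = z j - ∑ k ∈ I, z k := by
    rw [Mflip_mulVec j I hI z j]; simp
  have hmI : ∀ k ∈ I, (Mflip j I *ᵥ z) k = -z k := by
    intro k hk
    rw [Mflip_mulVec j I hI z k]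
    have : k ≠ j := fun h => hI (h ▸ hk)
    simp [this, hk]
  have hmO : ∀ k ∈ (Finset.univ.erase j) \ I, (Mflip j I *ᵥ z) k = z k := by
    intro k hk
    rcases Finset.mem_sdiff.mp hk with ⟨hk1, hk2⟩
    rw [Mflip_mulVec j I hI z k]
    simp [(Finset.mem_erase.mp hk1).1, hk2]
  simp only [relu, Pi.add_apply, hb2]
  rw [hsplit, hsplit, hWj]
  simp only [relu]
  have e1 : ∑ k ∈ (Finset.univ.erase j) \ I, W2 0 k * max ((Mflip j I *ᵥ z) k) 0
      = ∑ k ∈ (Finset.univ.erase j) \ I, -max (z k) 0 := by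
    refine Finset.sum_congr rfl fun k hk => ?_
    rw [hmO k hk, hvz k (Finset.mem_sdiff.mp hk).1]; ring
  have e2 : ∑ k ∈ I, W2 0 k * max ((Mflip j I *ᵥ z) k) 0
      = ∑ k ∈ I, -max (-z k) 0 := by
    refine Finset.sum_congr rfl fun k hk => ?_
    rw [hmI k hk, hvz k (hIsub hk)]; ring
  have e3 : ∑ k ∈ (Finset.univ.erase j) \ I, W2 0 k * max (z k) 0
      = ∑ k ∈ (Finset.univ.erase j) \ I, -max (z k) 0 := by
    refine Finset.sum_congr rfl fun k hk => ?_
    rw [hvz k (Finset.mem_sdiff.mp hk).1]; ring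
  have e4 : ∑ k ∈ I, W2 0 k * max (z k) 0 = ∑ k ∈ I, -max (z k) 0 := by
    refine Finset.sum_congr rfl fun k hk => ?_
    rw [hvz k (hIsub hk)]; ring
  rw [hmj, e1, e2, e3, e4]
  simp only [Finset.sum_neg_distrib]
  set S := ∑ k ∈ I, z k with hS
  set T := ∑ k ∈ I, max (-z k) 0 with hT
  set C := ∑ k ∈ (Finset.univ.erase j) \ I, max (z k) 0 with hC
  have hsum : ∑ k ∈ I, max (z k) 0 = S + T := by
    rw [hS, hT, ← Finset.sum_add_distrib]
    refine Finset.sum_congr rfl fun k _ => ?_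
    rcases le_total (z k) 0 with h | h
    · rw [max_eq_right h, max_eq_left (by linarith)]; ring
    · rw [max_eq_left h, max_eq_right (by linarith)]; ring
  rw [hsum]
  have hT0 : 0 ≤ T := Finset.sum_nonneg fun k _ => le_max_right _ _
  have hST0 : 0 ≤ S + T := by
    rw [← hsum]; exact Finset.sum_nonneg fun k _ => le_max_right _ _
  have hC0 : 0 ≤ C := Finset.sum_nonneg fun k _ => le_max_right _ _
  have := key_relu (z j) S T C hT0 hST0 hC0
  convert this using 2 <;> ring

end
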